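/- Let G : ℝ → ℝ be the sectorial Green function of D³+1. Then for every real x ≠ 0, G is three times differentiable at x and satisfies the homogeneous equation G'''(x) + G(x) = 0. -/

import Mathlib

open Real

/-- The sectorial Green function of the cubic operator `D³ + 1`. -/
noncomputable def greenC3 (x : ℝ) : ℝ :=
  if 0 ≤ x then (1/3) * Real.exp (-x)
  else (1/3) * Real.exp (x/2) *
    (Real.cos (Real.sqrt 3 * x / 2) - Real.sqrt 3 * Real.sin (Real.sqrt 3 * x / 2))

noncomputable def gPos (x : ℝ) : ℝ := (1/3) * Real.exp (-x)

noncomputable def gNeg (x : ℝ) : ℝ :=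
  (1/3) * Real.exp (x/2) *
    (Real.cos (Real.sqrt 3 * x / 2) - Real.sqrt 3 * Real.sin (Real.sqrt 3 * x / 2))

noncomputable def gNeg1 (x : ℝ) : ℝ :=
  (1/3) * Real.exp (x/2) *
    (-(Real.cos (Real.sqrt 3 * x / 2)) - Real.sqrt 3 * Real.sin (Real.sqrt 3 * x / 2))

noncomputable def gNeg2 (x : ℝ) : ℝ :=
  -(2/3) * Real.exp (x/2) * Real.cos (Real.sqrt 3 * x / 2)

lemma hs3 : Real.sqrt 3 * Real.sqrt 3 = 3 := Real.mul_self_sqrt (by norm_num)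

lemma hgPos : ∀ x : ℝ, HasDerivAt gPos (-(gPos x)) x := by
  intro x
  have h : HasDerivAt (fun x : ℝ => -x) (-1) x := (hasDerivAt_id x).neg
  have := (h.exp).const_mul (1/3 : ℝ)
  refine this.congr_deriv (Eq.symm ?_)
  unfold gPos; ring

lemma hx2 (x : ℝ) : HasDerivAt (fun x : ℝ => x/2) (1/2) x := by
  simpa using (hasDerivAt_id x).div_const 2

lemma hsx (x : ℝ) : HasDerivAt (fun x : ℝ => Real.sqrt 3 * x / 2) (Real.sqrt 3 / 2) x := by
  simpa using ((hasDerivAt_id x).const_mul (Real.sqrt 3)).div_const 2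

lemma hgNeg : ∀ x : ℝ, HasDerivAt gNeg (gNeg1 x) x := by
  intro x
  have h := (((hx2 x).exp.const_mul (1/3 : ℝ)).mul
    (((hsx x).cos).sub (((hsx x).sin).const_mul (Real.sqrt 3))))
  refine h.congr_deriv (Eq.symm ?_)
  simp only [gNeg1, Pi.sub_apply, Pi.neg_apply]
  linear_combination (Real.exp (x/2) * Real.cos (Real.sqrt 3 * x / 2) / 6) * hs3

lemma hgNeg1 : ∀ x : ℝ, HasDerivAt gNeg1 (gNeg2 x) x := by
  intro x
  have h := (((hx2 x).exp.const_mul (1/3 : ℝ)).mul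
    ((((hsx x).cos).neg).sub (((hsx x).sin).const_mul (Real.sqrt 3))))
  refine h.congr_deriv (Eq.symm ?_)
  simp only [gNeg2, Pi.sub_apply, Pi.neg_apply]
  linear_combination (Real.exp (x/2) * Real.cos (Real.sqrt 3 * x / 2) / 6) * hs3

lemma hgNeg2 : ∀ x : ℝ, HasDerivAt gNeg2 (-(gNeg x)) x := by
  intro x
  have h := (((hx2 x).exp.const_mul (-(2/3) : ℝ)).mul ((hsx x).cos))
  refine h.congr_deriv (Eq.symm ?_)
  simp only [gNeg]
  ring

theorem greenC3_homogeneous_off_origin :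
    ∀ x : ℝ, x ≠ 0 →
      DifferentiableAt ℝ greenC3 x ∧
      DifferentiableAt ℝ (deriv greenC3) x ∧
      DifferentiableAt ℝ (deriv (deriv greenC3)) x ∧
      deriv (deriv (deriv greenC3)) x + greenC3 x = 0 := by
  intro x hx
  rcases lt_or_gt_of_ne hx with hneg | hpos
  · -- x < 0
    have hev : greenC3 =ᶠ[nhds x] gNeg := by
      filter_upwards [Iio_mem_nhds hneg] with y hy
      simp [greenC3, gNeg, not_le.mpr (Set.mem_Iio.mp hy)]
    have hd : deriv gNeg = gNeg1 := funext fun y => (hgNeg y).deriv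
    have hd1 : deriv gNeg1 = gNeg2 := funext fun y => (hgNeg1 y).deriv
    have hd2 : deriv gNeg2 = fun y => -(gNeg y) := funext fun y => (hgNeg2 y).deriv
    have hev1 : deriv greenC3 =ᶠ[nhds x] gNeg1 := by
      have := hev.deriv; rwa [hd] at this
    have hev2 : deriv (deriv greenC3) =ᶠ[nhds x] gNeg2 := by
      have := hev1.deriv; rwa [hd1] at this
    refine ⟨hev.differentiableAt_iff.mpr (hgNeg x).differentiableAt,
      hev1.differentiableAt_iff.mpr (hgNeg1 x).differentiableAt,
      hev2.differentiableAt_iff.mpr (hgNeg2 x).differentiableAt, ?_⟩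
    have h3 : deriv (deriv (deriv greenC3)) x = -(gNeg x) := by
      rw [hev2.deriv_eq, hd2]
    rw [h3, hev.eq_of_nhds]; ring
  · -- x > 0
    have hev : greenC3 =ᶠ[nhds x] gPos := by
      filter_upwards [Ioi_mem_nhds hpos] with y hy
      simp [greenC3, gPos, le_of_lt (Set.mem_Ioi.mp hy)]
    have hd : deriv gPos = fun y => -(gPos y) := funext fun y => (hgPos y).deriv
    have hd' : ∀ y, HasDerivAt (fun y => -(gPos y)) (gPos y) y := by
      intro y; have := (hgPos y).neg; simp only [neg_neg] at this; exact this
    have hd1 : deriv (fun y => -(gPos y)) = gPos := funext fun y => (hd' y).deriv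
    have hev1 : deriv greenC3 =ᶠ[nhds x] fun y => -(gPos y) := by
      have := hev.deriv; rwa [hd] at this
    have hev2 : deriv (deriv greenC3) =ᶠ[nhds x] gPos := by
      have := hev1.deriv; rwa [hd1] at this
    refine ⟨hev.differentiableAt_iff.mpr (hgPos x).differentiableAt,
      hev1.differentiableAt_iff.mpr (hd' x).differentiableAt,
      hev2.differentiableAt_iff.mpr (hgPos x).differentiableAt, ?_⟩
    have h3 : deriv (deriv (deriv greenC3)) x = -(gPos x) := by
      rw [hev2.deriv_eq, hd]
    rw [h3, hev.eq_of_nhds]; ring
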